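/- Let S be a formula over ℂ. Then ℂ[D]⊗S, with the unique extension of the products, satisfies the half Jacobi identity for all of its elements (is a VLA-SS) if and only if the half commutator relation holds on S, i.e. for all u,v,w ∈ S and all m,n ∈ ℕ: u_m(v_nw) − v_n(u_mw) = Σ_{i≥0} binom(m,i)·( (u_iv)_{m+n−i} w ) in ℂ[D]⊗S. -/

import Mathlib

open scoped BigOperators

noncomputable section

variable {S : Type*} [AddCommGroup S] [Module ℂ S]

/-- The operator `D` on `ℂ[D]⊗S` (realized as `ℕ →₀ S`, where `Finsupp.single k u`
stands for `D^k ⊗ u`): it sends `D^k ⊗ u` to `D^{k+1} ⊗ u`. -/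
def Dop (S : Type*) [AddCommGroup S] [Module ℂ S] : (ℕ →₀ S) →ₗ[ℂ] (ℕ →₀ S) :=
  Finsupp.lmapDomain S ℂ (fun k => k + 1)

/-- A formula over `ℂ`: a vector space `S` with bilinear maps
`Fₙ : S × S → ℂ[D]⊗S` (`n : ℕ`), vanishing for `n` sufficiently large. -/
structure Formula (S : Type*) [AddCommGroup S] [Module ℂ S] where
  F : ℕ → S →ₗ[ℂ] S →ₗ[ℂ] (ℕ →₀ S)
  trunc : ∀ u v : S, ∃ N : ℕ, ∀ n : ℕ, N ≤ n → F n u v = 0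

/-- The defining properties of the extension of the products of a formula `S`
to `ℂ[D]⊗S`: it agrees with `Fₙ` on `S`, and satisfies `(DA)ₙB = −n·A_{n−1}B`,
`(DA)₀B = 0` and `D(AₙB) = (DA)ₙB + Aₙ(DB)`. -/
def ExtProp (A : Formula S)
    (M : ℕ → (ℕ →₀ S) →ₗ[ℂ] (ℕ →₀ S) →ₗ[ℂ] (ℕ →₀ S)) : Prop :=
  (∀ (n : ℕ) (u v : S), M n (Finsupp.single 0 u) (Finsupp.single 0 v) = A.F n u v) ∧
  (∀ (n : ℕ) (x y : ℕ →₀ S), M (n + 1) (Dop S x) y = (-((n : ℂ) + 1)) • M n x y) ∧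
  (∀ x y : ℕ →₀ S, M 0 (Dop S x) y = 0) ∧
  (∀ (n : ℕ) (x y : ℕ →₀ S),
    Dop S (M n x y) = M n (Dop S x) y + M n x (Dop S y))


/-- The half Jacobi identity for the extended products on `ℂ[D]⊗S`. -/
def HalfJacobi (M : ℕ → (ℕ →₀ S) →ₗ[ℂ] (ℕ →₀ S) →ₗ[ℂ] (ℕ →₀ S)) : Prop :=
  ∀ (k m n : ℕ) (x y z : ℕ →₀ S),
    ∑ᶠ i : ℕ, ((-1 : ℂ) ^ i * (Nat.choose k i : ℂ)) •
        (M (m + k - i) x (M (n + i) y z)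
          - ((-1 : ℂ) ^ k) • M (n + k - i) y (M (m + i) x z))
      = ∑ᶠ i : ℕ, ((Nat.choose m i : ℂ)) • M (m + n - i) (M (k + i) x y) z

/-! ### Auxiliary combinatorial lemmas -/

lemma natid1 (m i : ℕ) : (m - i) * Nat.choose m i = m * Nat.choose (m - 1) i := by
  cases m with
  | zero => simp
  | succ m' =>
    simp only [Nat.succ_sub_one]
    rw [Nat.mul_comm, ← Nat.choose_succ_right_eq, ← Nat.add_one_mul_choose_eq]

lemma natid2 (m i : ℕ) : (i + 1) * Nat.choose m (i + 1) = m * Nat.choose (m - 1) i := by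
  cases m with
  | zero => simp
  | succ m' =>
    simp only [Nat.succ_sub_one]
    rw [Nat.mul_comm, ← Nat.add_one_mul_choose_eq]

section PW
variable {V : Type*} [AddCommGroup V] [Module ℂ V]

lemma pwY (f : ℕ → V) (m n j : ℕ) (hj : j ≤ m) :
    (((j + 1) * Nat.choose m (j + 1) : ℕ) : ℂ) • f (m + n - j - 1)
      - (((m + n - j : ℕ) : ℂ) * (Nat.choose m j : ℂ)) • f (m + n - j - 1)
    = (-(n : ℂ) * (Nat.choose m j : ℂ)) • f (m + (n - 1) - j) := by
  have h1 : ((j + 1) * Nat.choose m (j + 1) : ℕ) = (m - j) * Nat.choose m j := by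
    rw [Nat.mul_comm, Nat.choose_succ_right_eq, Nat.mul_comm]
  have h2 : (m + n - j : ℕ) = (m - j) + n := by omega
  cases n with
  | zero =>
    rw [h1, h2, ← sub_smul]
    push_cast
    simp
  | succ n' =>
    have h3 : m + (n' + 1) - j - 1 = m + (n' + 1 - 1) - j := by omega
    rw [h3, ← sub_smul]
    congr 1
    push_cast [h1, h2]
    ring

lemma pwZ (f : ℕ → V) (m n i : ℕ) (hi : i ≤ m) :
    (((m + n - i : ℕ) : ℂ) * (Nat.choose m i : ℂ)) • f (m + n - i - 1)
    = ((m * Nat.choose (m - 1) i : ℕ) : ℂ) • f (m - 1 + n - i)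
      + ((n * Nat.choose m i : ℕ) : ℂ) • f (m + (n - 1) - i) := by
  have h1 : (m + n - i : ℕ) = (m - i) + n := by omega
  rcases Nat.eq_zero_or_pos m with hm | hm
  · subst hm
    interval_cases i
    simp
  · cases n with
    | zero =>
      have h3 : m + 0 - i - 1 = m - 1 + 0 - i := by omega
      rw [h3]
      have h4 : ((m + 0 - i : ℕ) : ℂ) * (Nat.choose m i : ℂ)
          = ((m * Nat.choose (m - 1) i : ℕ) : ℂ) := by
        rw [← natid1]; push_cast [h1]; ring
      rw [h4]; simp
    | succ n' =>
      have h4 : (((m + (n' + 1) - i : ℕ) : ℂ) * (Nat.choose m i : ℂ)) • f (m + (n' + 1) - i - 1)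
          = (((m - i) * Nat.choose m i : ℕ) : ℂ) • f (m + (n' + 1) - i - 1)
            + (((n' + 1) * Nat.choose m i : ℕ) : ℂ) • f (m + (n' + 1) - i - 1) := by
        rw [← add_smul]; congr 1; rw [h1]; push_cast; ring
      have e1 : m - 1 + (n' + 1) - i = m + (n' + 1) - i - 1 := by omega
      have e2 : m + (n' + 1 - 1) - i = m + (n' + 1) - i - 1 := by omega
      rw [h4, natid1, e1, e2]

lemma pascal_sum (m : ℕ) (T : ℕ → V) :
    ∑ i ∈ Finset.range (m + 2), (Nat.choose (m + 1) i : ℂ) • T i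
      = ∑ i ∈ Finset.range (m + 1), (Nat.choose m i : ℂ) • T (i + 1)
        + ∑ i ∈ Finset.range (m + 1), (Nat.choose m i : ℂ) • T i := by
  rw [Finset.sum_range_succ']
  have e : ∀ i, (Nat.choose (m + 1) (i + 1) : ℂ) • T (i + 1)
      = (Nat.choose m i : ℂ) • T (i + 1) + (Nat.choose m (i + 1) : ℂ) • T (i + 1) := by
    intro i
    rw [← add_smul]
    congr 1
    rw [Nat.choose_succ_succ]
    push_cast
    ring
  rw [Finset.sum_congr rfl fun i _ => e i, Finset.sum_add_distrib]
  have e2 : ∑ i ∈ Finset.range (m + 1), (Nat.choose m (i + 1) : ℂ) • T (i + 1)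
        + (Nat.choose (m + 1) 0 : ℂ) • T 0
      = ∑ i ∈ Finset.range (m + 1), (Nat.choose m i : ℂ) • T i := by
    rw [Finset.sum_range_succ' (fun i => (Nat.choose m i : ℂ) • T i) m,
      Finset.sum_range_succ, Nat.choose_succ_self]
    simp
  rw [add_assoc, e2]

lemma pascal_sum_sign (k : ℕ) (T : ℕ → V) :
    ∑ i ∈ Finset.range (k + 2), ((-1 : ℂ) ^ i * (Nat.choose (k + 1) i : ℂ)) • T i
      = ∑ i ∈ Finset.range (k + 1), ((-1 : ℂ) ^ i * (Nat.choose k i : ℂ)) • T i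
        - ∑ i ∈ Finset.range (k + 1), ((-1 : ℂ) ^ i * (Nat.choose k i : ℂ)) • T (i + 1) := by
  rw [Finset.sum_range_succ']
  have e : ∀ i, ((-1 : ℂ) ^ (i + 1) * (Nat.choose (k + 1) (i + 1) : ℂ)) • T (i + 1)
      = ((-1 : ℂ) ^ (i + 1) * (Nat.choose k (i + 1) : ℂ)) • T (i + 1)
        - ((-1 : ℂ) ^ i * (Nat.choose k i : ℂ)) • T (i + 1) := by
    intro i
    rw [← sub_smul]
    congr 1
    rw [Nat.choose_succ_succ]
    push_cast
    ring
  rw [Finset.sum_congr rfl fun i _ => e i, Finset.sum_sub_distrib]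
  have e2 : ∑ i ∈ Finset.range (k + 1), ((-1 : ℂ) ^ (i + 1) * (Nat.choose k (i + 1) : ℂ)) • T (i + 1)
        + ((-1 : ℂ) ^ 0 * (Nat.choose (k + 1) 0 : ℂ)) • T 0
      = ∑ i ∈ Finset.range (k + 1), ((-1 : ℂ) ^ i * (Nat.choose k i : ℂ)) • T i := by
    rw [Finset.sum_range_succ' (fun i => ((-1 : ℂ) ^ i * (Nat.choose k i : ℂ)) • T i) k,
      Finset.sum_range_succ, Nat.choose_succ_self]
    simp
  rw [sub_add_eq_add_sub, e2]

end PW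

section Aux
variable (A : Formula S) (M : ℕ → (ℕ →₀ S) →ₗ[ℂ] (ℕ →₀ S) →ₗ[ℂ] (ℕ →₀ S))

lemma MD_left (hM : ExtProp A M) (t : ℕ) (x y : ℕ →₀ S) :
    M t (Dop S x) y = (-(t : ℂ)) • M (t - 1) x y := by
  cases t with
  | zero => simp [hM.2.2.1]
  | succ t => simpa using hM.2.1 t x y

lemma MD_right (hM : ExtProp A M) (t : ℕ) (x y : ℕ →₀ S) :
    M t x (Dop S y) = Dop S (M t x y) + (t : ℂ) • M (t - 1) x y := by
  have h := hM.2.2.2 t x y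
  rw [MD_left A M hM] at h
  rw [h, neg_smul]
  abel

def Rsum (k m n : ℕ) (x y z : ℕ →₀ S) : ℕ →₀ S :=
  ∑ i ∈ Finset.range (m + 1), ((Nat.choose m i : ℂ)) • M (m + n - i) (M (k + i) x y) z

def Lsum (k m n : ℕ) (x y z : ℕ →₀ S) : ℕ →₀ S :=
  ∑ i ∈ Finset.range (k + 1), ((-1 : ℂ) ^ i * (Nat.choose k i : ℂ)) •
    (M (m + k - i) x (M (n + i) y z) - ((-1 : ℂ) ^ k) • M (n + k - i) y (M (m + i) x z))

lemma finsum_R (k m n : ℕ) (x y z : ℕ →₀ S) :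
    ∑ᶠ i : ℕ, ((Nat.choose m i : ℂ)) • M (m + n - i) (M (k + i) x y) z
      = Rsum M k m n x y z := by
  apply finsum_eq_sum_of_support_subset
  intro i hi
  simp only [Function.mem_support, Ne] at hi
  simp only [Finset.coe_range, Set.mem_Iio]
  by_contra h
  exact hi (by rw [Nat.choose_eq_zero_of_lt (by omega)]; simp)

lemma finsum_L (k m n : ℕ) (x y z : ℕ →₀ S) :
    ∑ᶠ i : ℕ, ((-1 : ℂ) ^ i * (Nat.choose k i : ℂ)) •
        (M (m + k - i) x (M (n + i) y z) - ((-1 : ℂ) ^ k) • M (n + k - i) y (M (m + i) x z))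
      = Lsum M k m n x y z := by
  apply finsum_eq_sum_of_support_subset
  intro i hi
  simp only [Function.mem_support, Ne] at hi
  simp only [Finset.coe_range, Set.mem_Iio]
  by_contra h
  exact hi (by rw [Nat.choose_eq_zero_of_lt (by omega)]; simp)

lemma finsum_AF (m n : ℕ) (u v : S) (w : ℕ →₀ S) :
    ∑ᶠ i : ℕ, ((Nat.choose m i : ℂ)) • M (m + n - i) (A.F i u v) w
      = ∑ i ∈ Finset.range (m + 1), ((Nat.choose m i : ℂ)) • M (m + n - i) (A.F i u v) w := by
  apply finsum_eq_sum_of_support_subset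
  intro i hi
  simp only [Function.mem_support, Ne] at hi
  simp only [Finset.coe_range, Set.mem_Iio]
  by_contra h
  exact hi (by rw [Nat.choose_eq_zero_of_lt (by omega)]; simp)

/-! ### The half-commutator relation, and its stability under `D` -/

def Eq0 (x y z : ℕ →₀ S) : Prop :=
  ∀ m n : ℕ, M m x (M n y z) - M n y (M m x z) = Rsum M 0 m n x y z

lemma stepX (hM : ExtProp A M) (x y z : ℕ →₀ S) (h : Eq0 M x y z) :
    Eq0 M (Dop S x) y z := by
  intro m n
  rw [MD_left A M hM m x (M n y z), MD_left A M hM m x z, map_smul, ← smul_sub, h (m - 1) n]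
  unfold Rsum
  cases m with
  | zero =>
    simp [hM.2.2.1]
  | succ m' =>
    simp only [Nat.add_sub_cancel]
    rw [Finset.smul_sum]
    conv_rhs => rw [Finset.sum_range_succ']
    simp only [zero_add, hM.2.2.1, map_zero, LinearMap.zero_apply, smul_zero, add_zero]
    refine Finset.sum_congr rfl fun i hi => ?_
    simp only [Finset.mem_range] at hi
    rw [MD_left A M hM, map_smul, LinearMap.smul_apply, smul_smul, smul_smul]
    have h2 : ((i + 1) * Nat.choose (m' + 1) (i + 1) : ℕ)
        = ((m' + 1) * Nat.choose m' i : ℕ) := by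
      simpa using natid2 (m' + 1) i
    have hc : ((Nat.choose (m' + 1) (i + 1) : ℂ)) * (-((i + 1 : ℕ) : ℂ))
        = (-((m' + 1 : ℕ) : ℂ)) * (Nat.choose m' i : ℂ) := by
      have h2' : ((i + 1 : ℕ) : ℂ) * (Nat.choose (m' + 1) (i + 1) : ℂ)
          = ((m' + 1 : ℕ) : ℂ) * (Nat.choose m' i : ℂ) := by exact_mod_cast congrArg Nat.cast h2
      push_cast at h2' ⊢
      linear_combination -h2'
    have hidx : m' + 1 + n - (i + 1) = m' + n - i := by omega
    have hidx2 : i + 1 - 1 = i := by omega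
    rw [hidx, hidx2]
    push_cast at hc ⊢
    rw [hc]

lemma stepY (hM : ExtProp A M) (x y z : ℕ →₀ S) (h : Eq0 M x y z) :
    Eq0 M x (Dop S y) z := by
  intro m n
  rw [MD_left A M hM n y z, map_smul, MD_left A M hM n y (M m x z), ← smul_sub, h m (n - 1)]
  unfold Rsum
  simp only [zero_add]
  rw [Finset.smul_sum]
  have expand : ∀ i : ℕ, (Nat.choose m i : ℂ) • M (m + n - i) (M i x (Dop S y)) z
      = ((Nat.choose m i : ℂ) * (-((m + n - i : ℕ) : ℂ))) • M (m + n - i - 1) (M i x y) z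
        + ((Nat.choose m i : ℂ) * (i : ℂ)) • M (m + n - i) (M (i - 1) x y) z := by
    intro i
    rw [MD_right A M hM, map_add, LinearMap.add_apply, MD_left A M hM, map_smul,
      LinearMap.smul_apply, smul_add, smul_smul, smul_smul]
  rw [Finset.sum_congr rfl fun i _ => expand i, Finset.sum_add_distrib]
  have e2 : ∑ i ∈ Finset.range (m + 1),
        ((Nat.choose m i : ℂ) * (i : ℂ)) • M (m + n - i) (M (i - 1) x y) z
      = ∑ j ∈ Finset.range (m + 1),
        (((j + 1) * Nat.choose m (j + 1) : ℕ) : ℂ) • M (m + n - j - 1) (M j x y) z := by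
    rw [Finset.sum_range_succ', Finset.sum_range_succ]
    simp only [Nat.choose_succ_self, Nat.cast_zero, Nat.cast_mul, mul_zero, zero_mul,
      zero_smul, add_zero]
    refine Finset.sum_congr rfl fun j hj => ?_
    have hidx : m + n - (j + 1) = m + n - j - 1 := by omega
    have hidx2 : j + 1 - 1 = j := by omega
    rw [hidx, hidx2]
    congr 1
    push_cast
    ring
  rw [e2, ← Finset.sum_add_distrib]
  symm
  refine Finset.sum_congr rfl fun j hj => ?_
  simp only [Finset.mem_range] at hj
  rw [smul_smul]
  have hpw := pwY (fun t => M t (M j x y) z) m n j (by omega)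
  beta_reduce at hpw
  rw [← hpw]
  have hc : (Nat.choose m j : ℂ) * (-((m + n - j : ℕ) : ℂ))
      = -((((m + n - j : ℕ) : ℂ)) * (Nat.choose m j : ℂ)) := by ring
  rw [hc, neg_smul]
  abel

lemma stepZ (hM : ExtProp A M) (x y z : ℕ →₀ S) (h : Eq0 M x y z) :
    Eq0 M x y (Dop S z) := by
  intro m n
  have hL : M m x (M n y (Dop S z)) - M n y (M m x (Dop S z))
      = Dop S (M m x (M n y z) - M n y (M m x z))
        + (m : ℂ) • (M (m - 1) x (M n y z) - M n y (M (m - 1) x z))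
        + (n : ℂ) • (M m x (M (n - 1) y z) - M (n - 1) y (M m x z)) := by
    rw [MD_right A M hM n y z, map_add, map_smul, MD_right A M hM m x (M n y z),
      MD_right A M hM m x z, map_add, map_smul, MD_right A M hM n y (M m x z),
      map_sub, smul_sub, smul_sub]
    abel
  rw [hL, h m n, h (m - 1) n, h m (n - 1)]
  have eR : Rsum M 0 m n x y (Dop S z)
      = Dop S (Rsum M 0 m n x y z)
        + ∑ i ∈ Finset.range (m + 1),
            ((((m + n - i : ℕ)) : ℂ) * (Nat.choose m i : ℂ)) • M (m + n - i - 1) (M i x y) z := by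
    unfold Rsum
    simp only [zero_add]
    have expand : ∀ i : ℕ, (Nat.choose m i : ℂ) • M (m + n - i) (M i x y) (Dop S z)
        = (Nat.choose m i : ℂ) • Dop S (M (m + n - i) (M i x y) z)
          + ((((m + n - i : ℕ)) : ℂ) * (Nat.choose m i : ℂ)) • M (m + n - i - 1) (M i x y) z := by
      intro i
      rw [MD_right A M hM, smul_add, smul_smul, mul_comm]
    rw [Finset.sum_congr rfl fun i _ => expand i, Finset.sum_add_distrib]
    congr 1
    rw [map_sum]
    exact Finset.sum_congr rfl fun i _ => (map_smul (Dop S) _ _).symm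
  rw [eR]
  have hsum : (m : ℂ) • Rsum M 0 (m - 1) n x y z + (n : ℂ) • Rsum M 0 m (n - 1) x y z
      = ∑ i ∈ Finset.range (m + 1),
          ((((m + n - i : ℕ)) : ℂ) * (Nat.choose m i : ℂ)) • M (m + n - i - 1) (M i x y) z := by
    cases m with
    | zero =>
      unfold Rsum
      simp [Finset.sum_range_one, smul_smul, mul_comm]
    | succ m' =>
      unfold Rsum
      simp only [Nat.add_sub_cancel, zero_add]
      rw [Finset.smul_sum, Finset.smul_sum]
      have ext : ∑ i ∈ Finset.range (m' + 1),
            (m' + 1 : ℂ) • ((Nat.choose m' i : ℂ) • M (m' + n - i) (M i x y) z)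
          = ∑ i ∈ Finset.range (m' + 1 + 1),
            (m' + 1 : ℂ) • ((Nat.choose m' i : ℂ) • M (m' + n - i) (M i x y) z) := by
        conv_rhs => rw [Finset.sum_range_succ]
        rw [Nat.choose_succ_self]
        simp
      push_cast
      rw [ext, ← Finset.sum_add_distrib]
      refine Finset.sum_congr rfl fun i hi => ?_
      simp only [Finset.mem_range] at hi
      have hpw := pwZ (fun t => M t (M i x y) z) (m' + 1) n i (by omega)
      simp only [Nat.add_sub_cancel] at hpw
      rw [hpw]
      push_cast
      module
  rw [← hsum]
  abel

/-! ### Reduction to singles -/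

lemma Dsingle (a : ℕ) (u : S) : Finsupp.single (a + 1) u = Dop S (Finsupp.single a u) := by
  simp [Dop, Finsupp.lmapDomain_apply, Finsupp.mapDomain_single]

lemma Rsum_addX (m n : ℕ) (f g y z : ℕ →₀ S) :
    Rsum M 0 m n (f + g) y z = Rsum M 0 m n f y z + Rsum M 0 m n g y z := by
  unfold Rsum
  rw [← Finset.sum_add_distrib]
  exact Finset.sum_congr rfl fun i _ => by
    rw [map_add, LinearMap.add_apply, map_add, LinearMap.add_apply, smul_add]

lemma Rsum_addY (m n : ℕ) (x f g z : ℕ →₀ S) :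
    Rsum M 0 m n x (f + g) z = Rsum M 0 m n x f z + Rsum M 0 m n x g z := by
  unfold Rsum
  rw [← Finset.sum_add_distrib]
  exact Finset.sum_congr rfl fun i _ => by
    rw [map_add, map_add, LinearMap.add_apply, smul_add]

lemma Rsum_addZ (m n : ℕ) (x y f g : ℕ →₀ S) :
    Rsum M 0 m n x y (f + g) = Rsum M 0 m n x y f + Rsum M 0 m n x y g := by
  unfold Rsum
  rw [← Finset.sum_add_distrib]
  exact Finset.sum_congr rfl fun i _ => by rw [map_add, smul_add]

lemma eq0_all (hM : ExtProp A M)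
    (base : ∀ u v w : S,
      Eq0 M (Finsupp.single 0 u) (Finsupp.single 0 v) (Finsupp.single 0 w)) :
    ∀ x y z : ℕ →₀ S, Eq0 M x y z := by
  have hZ : ∀ (u v : S) (z : ℕ →₀ S), Eq0 M (Finsupp.single 0 u) (Finsupp.single 0 v) z := by
    intro u v z
    induction z using Finsupp.induction_linear with
    | zero => intro m n; simp [Rsum]
    | add f g hf hg =>
      intro m n
      simp only [map_add]
      rw [Rsum_addZ, ← hf m n, ← hg m n]
      abel
    | single a w =>
      induction a with
      | zero => exact base u v w
      | succ a ih => rw [Dsingle]; exact stepZ A M hM _ _ _ ih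
  have hY : ∀ (u : S) (y z : ℕ →₀ S), Eq0 M (Finsupp.single 0 u) y z := by
    intro u y z
    induction y using Finsupp.induction_linear with
    | zero => intro m n; simp [Rsum]
    | add f g hf hg =>
      intro m n
      simp only [map_add, LinearMap.add_apply]
      rw [Rsum_addY, ← hf m n, ← hg m n]
      abel
    | single a v =>
      induction a with
      | zero => exact hZ u v z
      | succ a ih => rw [Dsingle]; exact stepY A M hM _ _ _ ih
  intro x y z
  induction x using Finsupp.induction_linear with
  | zero => intro m n; simp [Rsum]
  | add f g hf hg =>
    intro m n
    simp only [map_add, LinearMap.add_apply]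
    rw [Rsum_addX, ← hf m n, ← hg m n]
    abel
  | single a u =>
    induction a with
    | zero => exact hY u y z
    | succ a ih => rw [Dsingle]; exact stepX A M hM _ _ _ ih

/-! ### Recursions in `k` -/

lemma Rrec (k m n : ℕ) (x y z : ℕ →₀ S) :
    Rsum M k (m + 1) n x y z = Rsum M k m (n + 1) x y z + Rsum M (k + 1) m n x y z := by
  unfold Rsum
  rw [pascal_sum m (fun i => M (m + 1 + n - i) (M (k + i) x y) z)]
  rw [add_comm]
  congr 1
  · refine Finset.sum_congr rfl fun i hi => ?_
    simp only [Finset.mem_range] at hi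
    have h1 : m + 1 + n - i = m + (n + 1) - i := by omega
    rw [h1]
  · refine Finset.sum_congr rfl fun i hi => ?_
    simp only [Finset.mem_range] at hi
    have h1 : m + 1 + n - (i + 1) = m + n - i := by omega
    have h2 : k + (i + 1) = k + 1 + i := by omega
    rw [h1, h2]

lemma Lrec (k m n : ℕ) (x y z : ℕ →₀ S) :
    Lsum M (k + 1) m n x y z = Lsum M k (m + 1) n x y z - Lsum M k m (n + 1) x y z := by
  unfold Lsum
  rw [pascal_sum_sign k (fun i => M (m + (k + 1) - i) x (M (n + i) y z)
      - ((-1 : ℂ) ^ (k + 1)) • M (n + (k + 1) - i) y (M (m + i) x z))]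
  rw [← Finset.sum_sub_distrib, ← Finset.sum_sub_distrib]
  refine Finset.sum_congr rfl fun i hi => ?_
  simp only [Finset.mem_range] at hi
  rw [← smul_sub, ← smul_sub]
  congr 1
  have e1 : m + (k + 1) - i = m + 1 + k - i := by omega
  have e2 : n + (k + 1) - i = n + 1 + k - i := by omega
  have e3 : m + (k + 1) - (i + 1) = m + k - i := by omega
  have e4 : n + (k + 1) - (i + 1) = n + k - i := by omega
  have e5 : (-1 : ℂ) ^ (k + 1) = -((-1 : ℂ) ^ k) := by rw [pow_succ]; ring
  rw [e1, e2, e3, e4, e5, neg_smul, neg_smul]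
  abel

lemma jac_of_eq0 (h0 : ∀ x y z : ℕ →₀ S, Eq0 M x y z) :
    ∀ (k m n : ℕ) (x y z : ℕ →₀ S), Lsum M k m n x y z = Rsum M k m n x y z := by
  intro k
  induction k with
  | zero =>
    intro m n x y z
    have hL : Lsum M 0 m n x y z = M m x (M n y z) - M n y (M m x z) := by
      unfold Lsum
      rw [Finset.sum_range_one]
      simp
    rw [hL]
    exact h0 x y z m n
  | succ k ih =>
    intro m n x y z
    rw [Lrec, ih (m + 1) n x y z, ih m (n + 1) x y z, Rrec]
    abel

end Aux

theorem stmt16 (A : Formula S)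
    (M : ℕ → (ℕ →₀ S) →ₗ[ℂ] (ℕ →₀ S) →ₗ[ℂ] (ℕ →₀ S)) (hM : ExtProp A M) :
    HalfJacobi M ↔
      ∀ (m n : ℕ) (u v w : S),
        M m (Finsupp.single 0 u) (M n (Finsupp.single 0 v) (Finsupp.single 0 w))
            - M n (Finsupp.single 0 v) (M m (Finsupp.single 0 u) (Finsupp.single 0 w))
          = ∑ᶠ i : ℕ, ((Nat.choose m i : ℂ)) •
              M (m + n - i) (A.F i u v) (Finsupp.single 0 w) := by
  have key : ∀ (m n : ℕ) (u v w : S),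
      (∑ᶠ i : ℕ, ((Nat.choose m i : ℂ)) •
          M (m + n - i) (A.F i u v) (Finsupp.single 0 w))
        = Rsum M 0 m n (Finsupp.single 0 u) (Finsupp.single 0 v) (Finsupp.single 0 w) := by
    intro m n u v w
    rw [finsum_AF A M]
    unfold Rsum
    refine Finset.sum_congr rfl fun i _ => ?_
    rw [zero_add, hM.1]
  have hL0 : ∀ (m n : ℕ) (x y z : ℕ →₀ S),
      Lsum M 0 m n x y z = M m x (M n y z) - M n y (M m x z) := by
    intro m n x y z
    unfold Lsum
    rw [Finset.sum_range_one]
    simp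
  constructor
  · intro hJ m n u v w
    have h := hJ 0 m n (Finsupp.single 0 u) (Finsupp.single 0 v) (Finsupp.single 0 w)
    rw [finsum_L, finsum_R, hL0] at h
    rw [h, key]
  · intro hbase
    have base : ∀ u v w : S,
        Eq0 M (Finsupp.single 0 u) (Finsupp.single 0 v) (Finsupp.single 0 w) := by
      intro u v w m n
      rw [hbase m n u v w, key]
    have h0 := eq0_all A M hM base
    intro k m n x y z
    rw [finsum_L, finsum_R]
    exact jac_of_eq0 M h0 k m n x y z

end
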